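/- Lemma (critical assignment hits a learned clause): Let a derivation C_1,…,C_β consist of α input clauses followed by clauses each of which is either a learned clause or a resolvent of two earlier clauses, with C_β the empty clause. Suppose M is an assignment satisfying all input clauses C_1,…,C_α. Then there exists an index k with α < k ≤ β such that C_k is a learned clause and ¬C_k ⊆ M. -/

import Mathlib

/-- Negation of a literal. -/
def Lit.neg {V : Type} (ℓ : V × Bool) : V × Bool := (ℓ.1, !ℓ.2)

lemma lit_mem_or {V : Type} (M : Set (V × Bool))
    (hM : ∀ v : V, Xor' ((v, true) ∈ M) ((v, false) ∈ M)) (ℓ : V × Bool) :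
    (ℓ ∈ M ∧ Lit.neg ℓ ∉ M) ∨ (ℓ ∉ M ∧ Lit.neg ℓ ∈ M) := by
  obtain ⟨v, b⟩ := ℓ
  have := hM v
  cases b <;> simp [Lit.neg, Xor', xor_def] at this ⊢ <;> tauto

/-- Critical assignment hits a learned clause: in a derivation whose input
clauses are the `C i` for `i < α`, whose clauses `C k` for `α ≤ k ≤ β` are each
either learned or a resolvent of two earlier clauses, and which ends in the
empty clause `C β = ∅`, any assignment `M` satisfying all input clauses
falsifies some learned clause, i.e. there is a learned `C k` with `¬C k ⊆ M`. -/
theorem stmt3 {V : Type} [DecidableEq V] (C : ℕ → Finset (V × Bool))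
    (Learned : ℕ → Prop) (α β : ℕ) (hαβ : α ≤ β)
    (M : Set (V × Bool))
    (hM : ∀ v : V, Xor' ((v, true) ∈ M) ((v, false) ∈ M))
    (hder : ∀ k, α ≤ k → k ≤ β → Learned k ∨
      ∃ i < k, ∃ j < k, ∃ ℓ ∈ C i, Lit.neg ℓ ∈ C j ∧
        C k = (C i).erase ℓ ∪ (C j).erase (Lit.neg ℓ))
    (hempty : C β = ∅)
    (hinput : ∀ i < α, ∃ ℓ ∈ C i, ℓ ∈ M) :
    ∃ k, α ≤ k ∧ k ≤ β ∧ Learned k ∧ ∀ ℓ ∈ C k, Lit.neg ℓ ∈ M := by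
  classical
  have key : ∀ k, k ≤ β → (∃ ℓ ∈ C k, ℓ ∈ M) ∨
      (∃ k', α ≤ k' ∧ k' ≤ β ∧ Learned k' ∧ ∀ ℓ ∈ C k', Lit.neg ℓ ∈ M) := by
    intro k
    induction k using Nat.strong_induction_on with
    | _ k IH =>
      intro hkβ
      by_cases hkα : k < α
      · left; exact hinput k hkα
      · push_neg at hkα
        rcases hder k hkα hkβ with hL | ⟨i, hi, j, hj, ℓ, hℓi, hℓj, hCk⟩
        · by_cases hfal : ∀ ℓ ∈ C k, Lit.neg ℓ ∈ M
          · exact Or.inr ⟨k, hkα, hkβ, hL, hfal⟩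
          · push_neg at hfal
            obtain ⟨ℓ, hℓ, hℓM⟩ := hfal
            left
            refine ⟨ℓ, hℓ, ?_⟩
            rcases lit_mem_or M hM ℓ with ⟨h, _⟩ | ⟨_, h⟩
            · exact h
            · exact absurd h hℓM
        · rcases IH i hi (le_trans (le_of_lt hi) hkβ) with hi' | hlearn
          · rcases IH j hj (le_trans (le_of_lt hj) hkβ) with hj' | hlearn
            · obtain ⟨ℓ₁, hℓ₁, hℓ₁M⟩ := hi'
              by_cases heq : ℓ₁ = ℓ
              · obtain ⟨ℓ₂, hℓ₂, hℓ₂M⟩ := hj'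
                have hne : ℓ₂ ≠ Lit.neg ℓ := by
                  intro h
                  subst h heq
                  rcases lit_mem_or M hM ℓ₁ with ⟨_, h2⟩ | ⟨h2, _⟩
                  · exact h2 hℓ₂M
                  · exact h2 hℓ₁M
                have hmem : ℓ₂ ∈ C k := by
                  rw [hCk]
                  exact Finset.mem_union_right _ (Finset.mem_erase.mpr ⟨hne, hℓ₂⟩)
                exact Or.inl ⟨ℓ₂, hmem, hℓ₂M⟩
              · have hmem : ℓ₁ ∈ C k := by
                  rw [hCk]
                  exact Finset.mem_union_left _ (Finset.mem_erase.mpr ⟨heq, hℓ₁⟩)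
                exact Or.inl ⟨ℓ₁, hmem, hℓ₁M⟩
            · exact Or.inr hlearn
          · exact Or.inr hlearn
  rcases key β le_rfl with ⟨ℓ, hℓ, _⟩ | h
  · simp [hempty] at hℓ
  · exact h
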